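/- (Double-bosonisation of the free braided groups over U_q(β).) The algebra U(β) admits a (necessarily unique, given the values on generators) Hopf algebra structure over k in which all the K_i and K̃_i are group-like, Δe_i = e_i ⊗ K_i + 1 ⊗ e_i, Δf_i = f_i ⊗ 1 + K̃_i⁻¹ ⊗ f_i, ε(e_i) = ε(f_i) = 0, ε(K_i) = ε(K̃_i) = 1, with antipode determined by S(K_i) = K_i⁻¹, S(K̃_i) = K̃_i⁻¹, S(e_i) = −e_i K_i⁻¹, S(f_i) = −K̃_i f_i. -/

import Mathlib

open scoped TensorProduct

namespace FreeDoubleBos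

/-- Generators of `U(β)`: the toral generators `K_i^{±1}, K̃_i^{±1}` and the
root generators `e_i, f_i`. `tor i ff b` is `K_i` (`b = ff`) or `K_i⁻¹`
(`b = tt`); `tor i tt b` is `K̃_i` or `K̃_i⁻¹`. -/
inductive Gen (n : ℕ) : Type
  | tor (i : Fin n) (tilde : Bool) (inv : Bool)
  | e (i : Fin n)
  | f (i : Fin n)
  deriving DecidableEq

noncomputable abbrev gg (k : Type) [Field k] {n : ℕ} (x : Gen n) :
    FreeAlgebra k (Gen n) := FreeAlgebra.ι k x

/-- The defining relations of the double-bosonisation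
`k⟨f⟩ ⋊ U_q(β) ⋉ k⟨e⟩`: the `K_i, K̃_i` are invertible and mutually commute,
`e_i K_j = q^{β_{ji}} K_j e_i`, `e_i K̃_j = q^{β_{ij}} K̃_j e_i`,
`f_i K_j = q^{-β_{ji}} K_j f_i`, `f_i K̃_j = q^{-β_{ij}} K̃_j f_i`, and
`[e_i, f_j] = δ_{ij}(K_i - K̃_i⁻¹)/(q_i - q_i⁻¹)`; there are no relations among
the `e_i` alone nor among the `f_i` alone. -/
inductive Rel (k : Type) [Field k] (n : ℕ) (β : Matrix (Fin n) (Fin n) ℤ)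
    (q : k) (qi : Fin n → k) :
    FreeAlgebra k (Gen n) → FreeAlgebra k (Gen n) → Prop
  | torInv (i : Fin n) (t : Bool) :
      Rel k n β q qi (gg k (.tor i t false) * gg k (.tor i t true)) 1
  | invTor (i : Fin n) (t : Bool) :
      Rel k n β q qi (gg k (.tor i t true) * gg k (.tor i t false)) 1
  | torComm (i j : Fin n) (t t' : Bool) (b b' : Bool) :
      Rel k n β q qi (gg k (.tor i t b) * gg k (.tor j t' b'))
        (gg k (.tor j t' b') * gg k (.tor i t b))
  | eK (i j : Fin n) :
      Rel k n β q qi (gg k (.e i) * gg k (.tor j false false))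
        ((q ^ (β j i)) • (gg k (.tor j false false) * gg k (.e i)))
  | eKt (i j : Fin n) :
      Rel k n β q qi (gg k (.e i) * gg k (.tor j true false))
        ((q ^ (β i j)) • (gg k (.tor j true false) * gg k (.e i)))
  | fK (i j : Fin n) :
      Rel k n β q qi (gg k (.f i) * gg k (.tor j false false))
        ((q ^ (-β j i)) • (gg k (.tor j false false) * gg k (.f i)))
  | fKt (i j : Fin n) :
      Rel k n β q qi (gg k (.f i) * gg k (.tor j true false))
        ((q ^ (-β i j)) • (gg k (.tor j true false) * gg k (.f i)))
  | ef_ne (i j : Fin n) (h : i ≠ j) :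
      Rel k n β q qi (gg k (.e i) * gg k (.f j)) (gg k (.f j) * gg k (.e i))
  | ef_eq (i : Fin n) :
      Rel k n β q qi (gg k (.e i) * gg k (.f i) - gg k (.f i) * gg k (.e i))
        ((qi i - (qi i)⁻¹)⁻¹ •
          (gg k (.tor i false false) - gg k (.tor i true true)))

/-- The algebra `U(β)`. -/
abbrev Ub (k : Type) [Field k] (n : ℕ) (β : Matrix (Fin n) (Fin n) ℤ)
    (q : k) (qi : Fin n → k) : Type := RingQuot (Rel k n β q qi)

variable (k : Type) [Field k] (n : ℕ) (β : Matrix (Fin n) (Fin n) ℤ)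
  (q : k) (qi : Fin n → k)

noncomputable def mkUb : FreeAlgebra k (Gen n) →ₐ[k] Ub k n β q qi :=
  RingQuot.mkAlgHom k (Rel k n β q qi)

noncomputable def Kg (i : Fin n) : Ub k n β q qi := mkUb k n β q qi (gg k (.tor i false false))
noncomputable def Kginv (i : Fin n) : Ub k n β q qi := mkUb k n β q qi (gg k (.tor i false true))
noncomputable def Ktg (i : Fin n) : Ub k n β q qi := mkUb k n β q qi (gg k (.tor i true false))
noncomputable def Ktginv (i : Fin n) : Ub k n β q qi := mkUb k n β q qi (gg k (.tor i true true))
noncomputable def eg (i : Fin n) : Ub k n β q qi := mkUb k n β q qi (gg k (.e i))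
noncomputable def fg (i : Fin n) : Ub k n β q qi := mkUb k n β q qi (gg k (.f i))

/-! ### Auxiliary development -/

section Aux

local notation "A" => Ub k n β q qi
local notation "π" => mkUb k n β q qi

/-- uniform name for the toral generators -/
noncomputable def tg (i : Fin n) (t b : Bool) : A := π (gg k (.tor i t b))

lemma relEq {a b : FreeAlgebra k (Gen n)} (h : Rel k n β q qi a b) : π a = π b :=
  RingQuot.mkAlgHom_rel k h

lemma tg_mul_inv (i : Fin n) (t : Bool) : tg k n β q qi i t false * tg k n β q qi i t true = 1 := by
  have := relEq k n β q qi (Rel.torInv i t)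
  simpa [tg, map_mul] using this

lemma tg_inv_mul (i : Fin n) (t : Bool) : tg k n β q qi i t true * tg k n β q qi i t false = 1 := by
  have := relEq k n β q qi (Rel.invTor i t)
  simpa [tg, map_mul] using this

lemma tg_comm (i j : Fin n) (t t' b b' : Bool) :
    tg k n β q qi i t b * tg k n β q qi j t' b' = tg k n β q qi j t' b' * tg k n β q qi i t b := by
  have := relEq k n β q qi (Rel.torComm i j t t' b b')
  simpa [tg, map_mul] using this

/-- generic: commuting past the inverse -/
lemma smul_conj_inv {R : Type} [Field R] {B : Type} [Ring B] [Algebra R B]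
    {X T T' : B} {c : R} (hc : c ≠ 0) (h : X * T = c • (T * X))
    (h1 : T * T' = 1) (h2 : T' * T = 1) : X * T' = c⁻¹ • (T' * X) := by
  have h' : T * X = c⁻¹ • (X * T) := by
    rw [h, smul_smul, inv_mul_cancel₀ hc, one_smul]
  calc X * T' = (T' * T) * (X * T') := by rw [h2, one_mul]
    _ = T' * ((T * X) * T') := by rw [mul_assoc, ← mul_assoc T X T']
    _ = T' * ((c⁻¹ • (X * T)) * T') := by rw [h']
    _ = c⁻¹ • (T' * (X * (T * T'))) := by
        simp [smul_mul_assoc, mul_smul_comm, mul_assoc]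
    _ = c⁻¹ • (T' * X) := by rw [h1, mul_one]

/-- the exponent in `e_i tg_{j,t} = q^(ee) tg_{j,t} e_i` -/
def ee (i j : Fin n) (t : Bool) : ℤ := if t then β i j else β j i

def sgn (b : Bool) : ℤ := if b then -1 else 1

lemma e_tor (hq : q ≠ 0) (i j : Fin n) (t b : Bool) :
    eg k n β q qi i * tg k n β q qi j t b
      = (q ^ (sgn b * ee n β i j t)) • (tg k n β q qi j t b * eg k n β q qi i) := by
  have base : eg k n β q qi i * tg k n β q qi j t false
      = (q ^ (ee n β i j t)) • (tg k n β q qi j t false * eg k n β q qi i) := by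
    cases t
    · have := relEq k n β q qi (Rel.eK i j)
      simpa [tg, eg, ee, map_mul, map_smul] using this
    · have := relEq k n β q qi (Rel.eKt i j)
      simpa [tg, eg, ee, map_mul, map_smul] using this
  cases b
  · simpa [sgn] using base
  · have := smul_conj_inv (zpow_ne_zero (ee n β i j t) hq) base
      (tg_mul_inv k n β q qi j t) (tg_inv_mul k n β q qi j t)
    simpa [sgn, zpow_neg] using this

lemma f_tor (hq : q ≠ 0) (i j : Fin n) (t b : Bool) :
    fg k n β q qi i * tg k n β q qi j t b
      = (q ^ (-(sgn b * ee n β i j t))) • (tg k n β q qi j t b * fg k n β q qi i) := by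
  have base : fg k n β q qi i * tg k n β q qi j t false
      = (q ^ (-ee n β i j t)) • (tg k n β q qi j t false * fg k n β q qi i) := by
    cases t
    · have := relEq k n β q qi (Rel.fK i j)
      simpa [tg, fg, ee, map_mul, map_smul] using this
    · have := relEq k n β q qi (Rel.fKt i j)
      simpa [tg, fg, ee, map_mul, map_smul] using this
  cases b
  · simpa [sgn] using base
  · have := smul_conj_inv (zpow_ne_zero (-ee n β i j t) hq) base
      (tg_mul_inv k n β q qi j t) (tg_inv_mul k n β q qi j t)
    simpa [sgn, zpow_neg] using this

lemma ef_comm {i j : Fin n} (h : i ≠ j) :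
    eg k n β q qi i * fg k n β q qi j = fg k n β q qi j * eg k n β q qi i := by
  have := relEq k n β q qi (Rel.ef_ne i j h)
  simpa [eg, fg, map_mul] using this

lemma ef_commutator (i : Fin n) :
    eg k n β q qi i * fg k n β q qi i - fg k n β q qi i * eg k n β q qi i
      = (qi i - (qi i)⁻¹)⁻¹ • (tg k n β q qi i false false - tg k n β q qi i true true) := by
  have := relEq k n β q qi (Rel.ef_eq i)
  simpa [eg, fg, tg, map_mul, map_smul, map_sub] using this

end Aux


section Constr

local notation "A" => Ub k n β q qi

lemma smul_flip {R : Type} [Field R] {B : Type} [Ring B] [Algebra R B]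
    {X T : B} {c : R} (hc : c ≠ 0) (h : X * T = c • (T * X)) :
    T * X = c⁻¹ • (X * T) := by
  rw [h, smul_smul, inv_mul_cancel₀ hc, one_smul]

/-! ### The counit -/

noncomputable def epsF : FreeAlgebra k (Gen n) →ₐ[k] k :=
  FreeAlgebra.lift k fun x => match x with
    | .tor _ _ _ => (1 : k)
    | .e _ => 0
    | .f _ => 0

lemma epsF_tor (i : Fin n) (t b : Bool) : epsF k n (gg k (.tor i t b)) = 1 := by
  simp [epsF]

lemma epsF_e (i : Fin n) : epsF k n (gg k (.e i)) = 0 := by simp [epsF]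

lemma epsF_f (i : Fin n) : epsF k n (gg k (.f i)) = 0 := by simp [epsF]

lemma epsF_rel : ∀ ⦃a b⦄, Rel k n β q qi a b → epsF k n a = epsF k n b := by
  intro a b h
  induction h <;>
    simp [map_mul, map_smul, map_sub, epsF_tor, epsF_e, epsF_f]

noncomputable def epsU : Ub k n β q qi →ₐ[k] k :=
  RingQuot.liftAlgHom k ⟨epsF k n, epsF_rel k n β q qi⟩

@[simp] lemma epsU_mk (a : FreeAlgebra k (Gen n)) :
    epsU k n β q qi (mkUb k n β q qi a) = epsF k n a :=
  RingQuot.liftAlgHom_mkAlgHom_apply _ _ _ _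

end Constr


section Del

open TensorProduct Algebra.TensorProduct

noncomputable def delF : FreeAlgebra k (Gen n) →ₐ[k] Ub k n β q qi ⊗[k] Ub k n β q qi :=
  FreeAlgebra.lift k fun x => match x with
    | .tor i t b => tg k n β q qi i t b ⊗ₜ[k] tg k n β q qi i t b
    | .e i => eg k n β q qi i ⊗ₜ[k] tg k n β q qi i false false
        + 1 ⊗ₜ[k] eg k n β q qi i
    | .f i => fg k n β q qi i ⊗ₜ[k] 1
        + tg k n β q qi i true true ⊗ₜ[k] fg k n β q qi i

@[simp] lemma delF_tor (i : Fin n) (t b : Bool) :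
    delF k n β q qi (gg k (.tor i t b)) = tg k n β q qi i t b ⊗ₜ[k] tg k n β q qi i t b := by
  simp [delF]

@[simp] lemma delF_e (i : Fin n) :
    delF k n β q qi (gg k (.e i)) = eg k n β q qi i ⊗ₜ[k] tg k n β q qi i false false
        + 1 ⊗ₜ[k] eg k n β q qi i := by
  simp [delF]

@[simp] lemma delF_f (i : Fin n) :
    delF k n β q qi (gg k (.f i)) = fg k n β q qi i ⊗ₜ[k] 1
        + tg k n β q qi i true true ⊗ₜ[k] fg k n β q qi i := by
  simp [delF]

lemma delF_rel (hq : q ≠ 0) :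
    ∀ ⦃a b⦄, Rel k n β q qi a b → delF k n β q qi a = delF k n β q qi b := by
  intro a b h
  induction h with
  | torInv i t =>
      simp [map_mul, tmul_mul_tmul, tg_mul_inv, ← one_def]
  | invTor i t =>
      simp [map_mul, tmul_mul_tmul, tg_inv_mul, ← one_def]
  | torComm i j t t' bb bb' =>
      simp [map_mul, tmul_mul_tmul, tg_comm k n β q qi i j t t' bb bb']
  | eK i j =>
      have h1 := e_tor k n β q qi hq i j false false
      simp [sgn, ee] at h1
      have h2 := tg_comm k n β q qi i j false false false false
      simp only [map_mul, map_smul, delF_tor, delF_e, add_mul, mul_add,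
        tmul_mul_tmul, one_mul, mul_one, h1, h2, smul_tmul', tmul_smul, smul_add]
  | eKt i j =>
      have h1 := e_tor k n β q qi hq i j true false
      simp [sgn, ee] at h1
      have h2 := tg_comm k n β q qi i j false true false false
      simp only [map_mul, map_smul, delF_tor, delF_e, add_mul, mul_add,
        tmul_mul_tmul, one_mul, mul_one, h1, h2, smul_tmul', tmul_smul, smul_add]
  | fK i j =>
      have h1 := f_tor k n β q qi hq i j false false
      simp [sgn, ee] at h1
      have h2 := tg_comm k n β q qi i j true false true false
      simp only [map_mul, map_smul, delF_tor, delF_f, add_mul, mul_add,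
        tmul_mul_tmul, one_mul, mul_one, h1, h2, smul_tmul', tmul_smul, smul_add,
        zpow_neg]
  | fKt i j =>
      have h1 := f_tor k n β q qi hq i j true false
      simp [sgn, ee] at h1
      have h2 := tg_comm k n β q qi i j true true true false
      simp only [map_mul, map_smul, delF_tor, delF_f, add_mul, mul_add,
        tmul_mul_tmul, one_mul, mul_one, h1, h2, smul_tmul', tmul_smul, smul_add,
        zpow_neg]
  | ef_ne i j hij =>
      -- e_i * Kt_j⁻¹ = q^(-β i j) • (Kt_j⁻¹ * e_i)
      have h1 := e_tor k n β q qi hq i j true true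
      simp [sgn, ee] at h1
      -- K_i * f_j = q^(β i j) • (f_j * K_i)
      have h2 : tg k n β q qi i false false * fg k n β q qi j
          = (q ^ (β i j)) • (fg k n β q qi j * tg k n β q qi i false false) := by
        have h0 := f_tor k n β q qi hq j i false false
        simp [sgn, ee] at h0
        have := smul_flip (inv_ne_zero (zpow_ne_zero (β i j) hq)) h0
        simpa [inv_inv] using this
      have h3 := ef_comm k n β q qi hij
      simp only [map_mul, delF_e, delF_f, add_mul, mul_add, tmul_mul_tmul,
        one_mul, mul_one, h1, h2, h3, smul_tmul', tmul_smul, smul_smul,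
        mul_inv_cancel₀ (zpow_ne_zero (β i j) hq),
        inv_mul_cancel₀ (zpow_ne_zero (β i j) hq), one_smul]
      abel
  | ef_eq i =>
      have h1 := e_tor k n β q qi hq i i true true
      simp [sgn, ee] at h1
      have h2 : tg k n β q qi i false false * fg k n β q qi i
          = (q ^ (β i i)) • (fg k n β q qi i * tg k n β q qi i false false) := by
        have h0 := f_tor k n β q qi hq i i false false
        simp [sgn, ee] at h0
        have := smul_flip (inv_ne_zero (zpow_ne_zero (β i i) hq)) h0
        simpa [inv_inv] using this
      have h3 : eg k n β q qi i * fg k n β q qi i = fg k n β q qi i * eg k n β q qi i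
          + (qi i - (qi i)⁻¹)⁻¹ • (tg k n β q qi i false false - tg k n β q qi i true true) := by
        rw [← ef_commutator k n β q qi i]; abel
      simp only [map_mul, map_smul, map_sub, delF_e, delF_f, delF_tor, add_mul,
        mul_add, tmul_mul_tmul, one_mul, mul_one, h1, h2, h3]
      simp only [smul_tmul', tmul_smul, smul_smul,
        mul_inv_cancel₀ (zpow_ne_zero (β i i) hq),
        inv_mul_cancel₀ (zpow_ne_zero (β i i) hq), one_smul]
      simp only [add_tmul, sub_tmul, tmul_sub, tmul_add, smul_add, smul_sub,
        smul_tmul', tmul_smul]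
      abel

noncomputable def delU (hq : q ≠ 0) : Ub k n β q qi →ₐ[k] Ub k n β q qi ⊗[k] Ub k n β q qi :=
  RingQuot.liftAlgHom k ⟨delF k n β q qi, delF_rel k n β q qi hq⟩

end Del


section Anti

open MulOpposite

lemma tor_e (hq : q ≠ 0) (i j : Fin n) (t b : Bool) :
    tg k n β q qi j t b * eg k n β q qi i
      = (q ^ (-(sgn b * ee n β i j t))) • (eg k n β q qi i * tg k n β q qi j t b) := by
  have := smul_flip (zpow_ne_zero (sgn b * ee n β i j t) hq) (e_tor k n β q qi hq i j t b)
  simpa [zpow_neg] using this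

lemma tor_f (hq : q ≠ 0) (i j : Fin n) (t b : Bool) :
    tg k n β q qi j t b * fg k n β q qi i
      = (q ^ (sgn b * ee n β i j t)) • (fg k n β q qi i * tg k n β q qi j t b) := by
  have := smul_flip (zpow_ne_zero (-(sgn b * ee n β i j t)) hq) (f_tor k n β q qi hq i j t b)
  simpa [zpow_neg] using this

section genericRing
variable {R : Type} [Field R] {B : Type} [Ring B] [Algebra R B]

lemma op_move1 {T X Y : B} {c : R} (h1 : T * X = c • (X * T)) (h2 : Y * T = T * Y) :
    T * -(X * Y) = c • (-(X * Y) * T) := by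
  rw [mul_neg, neg_mul, smul_neg, neg_inj, ← mul_assoc, h1, smul_mul_assoc,
    mul_assoc, ← h2, ← mul_assoc]

lemma op_move2 {T X Y : B} {c : R} (h1 : T * Y = c • (Y * T)) (h2 : X * T = T * X) :
    T * -(X * Y) = c • (-(X * Y) * T) := by
  rw [mul_neg, neg_mul, smul_neg, neg_inj, ← mul_assoc, ← h2, mul_assoc, h1,
    mul_smul_comm, ← mul_assoc]

lemma op_ef_ne {Kt f e K' : B} {c : R} (hc : c ≠ 0)
    (hfe : f * e = e * f)
    (h1 : Kt * e = c⁻¹ • (e * Kt))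
    (h2 : f * K' = c • (K' * f))
    (h3 : Kt * K' = K' * Kt) :
    -(Kt * f) * -(e * K') = -(e * K') * -(Kt * f) := by
  rw [neg_mul_neg, neg_mul_neg]
  calc Kt * f * (e * K') = Kt * ((f * e) * K') := by simp only [mul_assoc]
    _ = (Kt * e) * (f * K') := by rw [hfe]; simp only [mul_assoc]
    _ = (c⁻¹ • (e * Kt)) * (c • (K' * f)) := by rw [h1, h2]
    _ = (c⁻¹ * c) • (e * ((Kt * K') * f)) := by
        rw [smul_mul_assoc, mul_smul_comm, smul_smul]; simp only [mul_assoc]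
    _ = e * K' * (Kt * f) := by
        rw [inv_mul_cancel₀ hc, one_smul, h3]; simp only [mul_assoc]

lemma op_ef_eq {Kt Ktinv f e K' K : B} {c c0 : R} (hc : c ≠ 0)
    (hfe : e * f - f * e = c0 • (K - Ktinv))
    (h1 : e * K' = c⁻¹ • (K' * e))
    (h2 : f * K' = c • (K' * f))
    (h3 : e * Kt = c • (Kt * e))
    (hKKt : Kt * K' = K' * Kt)
    (hKtinv : Kt * Ktinv = 1)
    (hK : Kt * K = K * Kt)
    (hKinvK : K' * K = 1) :
    -(Kt * f) * -(e * K') - -(e * K') * -(Kt * f) = c0 • (K' - Kt) := by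
  rw [neg_mul_neg, neg_mul_neg]
  have A1 : Kt * f * (e * K') = K' * Kt * (f * e) := by
    calc Kt * f * (e * K') = Kt * (f * (c⁻¹ • (K' * e))) := by
          rw [h1]; simp only [mul_assoc]
      _ = c⁻¹ • (Kt * ((f * K') * e)) := by
          rw [mul_smul_comm, mul_smul_comm]; simp only [mul_assoc]
      _ = c⁻¹ • (Kt * ((c • (K' * f)) * e)) := by rw [h2]
      _ = (c⁻¹ * c) • (Kt * (K' * (f * e))) := by
          rw [smul_mul_assoc, mul_smul_comm, smul_smul]; simp only [mul_assoc]
      _ = Kt * K' * (f * e) := by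
          rw [inv_mul_cancel₀ hc, one_smul]; simp only [mul_assoc]
      _ = K' * Kt * (f * e) := by rw [hKKt]
  have A2 : e * K' * (Kt * f) = K' * Kt * (e * f) := by
    calc e * K' * (Kt * f) = (c⁻¹ • (K' * e)) * (Kt * f) := by rw [h1]
      _ = c⁻¹ • (K' * ((e * Kt) * f)) := by
          rw [smul_mul_assoc]; simp only [mul_assoc]
      _ = c⁻¹ • (K' * ((c • (Kt * e)) * f)) := by rw [h3]
      _ = (c⁻¹ * c) • (K' * (Kt * (e * f))) := by
          simp only [smul_mul_assoc, mul_smul_comm, smul_smul, mul_assoc]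
      _ = K' * Kt * (e * f) := by
          rw [inv_mul_cancel₀ hc, one_smul]; simp only [mul_assoc]
  rw [A1, A2]
  calc K' * Kt * (f * e) - K' * Kt * (e * f)
      = -(K' * Kt * (e * f - f * e)) := by rw [mul_sub]; abel
    _ = -(K' * Kt * (c0 • (K - Ktinv))) := by rw [hfe]
    _ = c0 • (K' * Kt * (Ktinv - K)) := by
        rw [mul_smul_comm, ← smul_neg]; congr 1; rw [mul_sub, mul_sub]; abel
    _ = c0 • (K' - Kt) := by
        congr 1
        rw [mul_sub, mul_assoc, hKtinv, mul_one, mul_assoc, hK, ← mul_assoc, hKinvK, one_mul]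

lemma smul_eq_smul_of_eq {x y : B} {c : R} (h : x = y) : c • x = c • y := by rw [h]

end genericRing

noncomputable def sF : FreeAlgebra k (Gen n) →ₐ[k] (Ub k n β q qi)ᵐᵒᵖ :=
  FreeAlgebra.lift k fun x => match x with
    | .tor i t b => op (tg k n β q qi i t (!b))
    | .e i => op (-(eg k n β q qi i * tg k n β q qi i false true))
    | .f i => op (-(tg k n β q qi i true false * fg k n β q qi i))

@[simp] lemma sF_tor (i : Fin n) (t b : Bool) :
    sF k n β q qi (gg k (.tor i t b)) = op (tg k n β q qi i t (!b)) := by simp [sF]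

@[simp] lemma sF_e (i : Fin n) :
    sF k n β q qi (gg k (.e i))
      = op (-(eg k n β q qi i * tg k n β q qi i false true)) := by simp [sF]

@[simp] lemma sF_f (i : Fin n) :
    sF k n β q qi (gg k (.f i))
      = op (-(tg k n β q qi i true false * fg k n β q qi i)) := by simp [sF]

lemma sF_rel (hq : q ≠ 0) :
    ∀ ⦃a b⦄, Rel k n β q qi a b → sF k n β q qi a = sF k n β q qi b := by
  intro a b h
  induction h with
  | torInv i t =>
      simp only [map_mul, map_one, sF_tor, Bool.not_true, Bool.not_false]
      rw [← op_mul, tg_mul_inv, op_one]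
  | invTor i t =>
      simp only [map_mul, map_one, sF_tor, Bool.not_true, Bool.not_false]
      rw [← op_mul, tg_inv_mul, op_one]
  | torComm i j t t' bb bb' =>
      simp only [map_mul, sF_tor]
      rw [← op_mul, ← op_mul, tg_comm]
  | eK i j =>
      simp only [map_mul, map_smul, sF_tor, sF_e, Bool.not_false]
      apply unop_injective
      simp only [unop_mul, unop_smul, unop_op]
      have h1 := tor_e k n β q qi hq i j false true
      simp [sgn, ee, zpow_neg] at h1
      exact op_move1 h1 (tg_comm k n β q qi i j false false true true)
  | eKt i j =>
      simp only [map_mul, map_smul, sF_tor, sF_e, Bool.not_false]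
      apply unop_injective
      simp only [unop_mul, unop_smul, unop_op]
      have h1 := tor_e k n β q qi hq i j true true
      simp [sgn, ee, zpow_neg] at h1
      exact op_move1 h1 (tg_comm k n β q qi i j false true true true)
  | fK i j =>
      simp only [map_mul, map_smul, sF_tor, sF_f, Bool.not_false]
      apply unop_injective
      simp only [unop_mul, unop_smul, unop_op]
      have h1 := tor_f k n β q qi hq i j false true
      simp only [sgn, ee, reduceIte, neg_mul, one_mul] at h1
      have h1' : tg k n β q qi j false true * fg k n β q qi i
          = q ^ (-β j i) • (fg k n β q qi i * tg k n β q qi j false true) := by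
        simpa using h1
      exact op_move2 h1' (tg_comm k n β q qi i j true false false true)
  | fKt i j =>
      simp only [map_mul, map_smul, sF_tor, sF_f, Bool.not_false]
      apply unop_injective
      simp only [unop_mul, unop_smul, unop_op]
      have h1 := tor_f k n β q qi hq i j true true
      have h1' : tg k n β q qi j true true * fg k n β q qi i
          = q ^ (-β i j) • (fg k n β q qi i * tg k n β q qi j true true) := by
        simpa [sgn, ee] using h1
      exact op_move2 h1' (tg_comm k n β q qi i j true true false true)
  | ef_ne i j hij =>
      simp only [map_mul, sF_e, sF_f]
      apply unop_injective
      simp only [unop_mul, unop_op]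
      have h1 := tor_e k n β q qi hq i j true false
      have h1' : tg k n β q qi j true false * eg k n β q qi i
          = (q ^ (β i j))⁻¹ • (eg k n β q qi i * tg k n β q qi j true false) := by
        simpa [sgn, ee, zpow_neg] using h1
      have h2 := f_tor k n β q qi hq j i false true
      have h2' : fg k n β q qi j * tg k n β q qi i false true
          = q ^ (β i j) • (tg k n β q qi i false true * fg k n β q qi j) := by
        simpa [sgn, ee, zpow_neg] using h2
      exact op_ef_ne (zpow_ne_zero _ hq) (ef_comm k n β q qi hij).symm h1'
        h2' (tg_comm k n β q qi j i true false false true)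
  | ef_eq i =>
      simp only [map_mul, map_sub, map_smul, sF_e, sF_f, sF_tor, Bool.not_false, Bool.not_true]
      apply unop_injective
      simp only [unop_mul, unop_sub, unop_smul, unop_op]
      have h1 := e_tor k n β q qi hq i i false true
      have h1' : eg k n β q qi i * tg k n β q qi i false true
          = (q ^ (β i i))⁻¹ • (tg k n β q qi i false true * eg k n β q qi i) := by
        simpa [sgn, ee, zpow_neg] using h1
      have h2 := f_tor k n β q qi hq i i false true
      have h2' : fg k n β q qi i * tg k n β q qi i false true
          = q ^ (β i i) • (tg k n β q qi i false true * fg k n β q qi i) := by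
        simpa [sgn, ee, zpow_neg] using h2
      have h3 := e_tor k n β q qi hq i i true false
      have h3' : eg k n β q qi i * tg k n β q qi i true false
          = q ^ (β i i) • (tg k n β q qi i true false * eg k n β q qi i) := by
        simpa [sgn, ee] using h3
      exact op_ef_eq (zpow_ne_zero _ hq) (ef_commutator k n β q qi i) h1' h2' h3'
        (tg_comm k n β q qi i i true false false true)
        (tg_mul_inv k n β q qi i true)
        (tg_comm k n β q qi i i true false false false)
        (tg_inv_mul k n β q qi i false)

noncomputable def sU (hq : q ≠ 0) : Ub k n β q qi →ₐ[k] (Ub k n β q qi)ᵐᵒᵖ :=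
  RingQuot.liftAlgHom k ⟨sF k n β q qi, sF_rel k n β q qi hq⟩

noncomputable def SU (hq : q ≠ 0) : Ub k n β q qi →ₗ[k] Ub k n β q qi :=
  (MulOpposite.opLinearEquiv k).symm.toLinearMap ∘ₗ (sU k n β q qi hq).toLinearMap

end Anti




/-! ### Generic convolution algebra lemmas -/

section Conv

open TensorProduct LinearMap

variable {R : Type} [CommRing R]

section mapvariants
variable {M N P Q M' N' : Type} [AddCommMonoid M] [AddCommMonoid N]
    [AddCommMonoid P] [AddCommMonoid Q] [AddCommMonoid M'] [AddCommMonoid N']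
    [Module R M] [Module R N] [Module R P] [Module R Q] [Module R M'] [Module R N']

lemma mcl (F : M →ₗ[R] M') (G : P →ₗ[R] M) (H : Q →ₗ[R] N) (u : P ⊗[R] Q) :
    TensorProduct.map (F ∘ₗ G) H u
      = TensorProduct.map F LinearMap.id (TensorProduct.map G H u) := by
  have := TensorProduct.map_comp F LinearMap.id G H
  rw [LinearMap.id_comp] at this
  exact DFunLike.congr_fun this u

lemma mcl' (F : M →ₗ[R] M') (G : P →ₗ[R] M) (H : Q →ₗ[R] N) (u : P ⊗[R] Q) :
    TensorProduct.map (F ∘ₗ G) H u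
      = TensorProduct.map F H (TensorProduct.map G LinearMap.id u) := by
  have := TensorProduct.map_comp F H G LinearMap.id
  rw [LinearMap.comp_id] at this
  exact DFunLike.congr_fun this u

lemma mcr (F : P →ₗ[R] M) (H : N →ₗ[R] N') (K : Q →ₗ[R] N) (u : P ⊗[R] Q) :
    TensorProduct.map F (H ∘ₗ K) u
      = TensorProduct.map LinearMap.id H (TensorProduct.map F K u) := by
  have := TensorProduct.map_comp LinearMap.id H F K
  rw [LinearMap.id_comp] at this
  exact DFunLike.congr_fun this u

lemma mcr' (F : P →ₗ[R] M) (H : N →ₗ[R] N') (K : Q →ₗ[R] N) (u : P ⊗[R] Q) :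
    TensorProduct.map F (H ∘ₗ K) u
      = TensorProduct.map F H (TensorProduct.map LinearMap.id K u) := by
  have := TensorProduct.map_comp F H LinearMap.id K
  rw [LinearMap.comp_id] at this
  exact DFunLike.congr_fun this u

lemma mc5 (F : P →ₗ[R] M) (H : Q →ₗ[R] N) (u : P ⊗[R] Q) :
    TensorProduct.map F H u
      = TensorProduct.map F LinearMap.id (TensorProduct.map LinearMap.id H u) := by
  have := TensorProduct.map_comp F LinearMap.id LinearMap.id H
  rw [LinearMap.comp_id, LinearMap.id_comp] at this
  exact DFunLike.congr_fun this u

lemma mc6 (F : P →ₗ[R] M) (H : Q →ₗ[R] N) (u : P ⊗[R] Q) :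
    TensorProduct.map F H u
      = TensorProduct.map LinearMap.id H (TensorProduct.map F LinearMap.id u) := by
  have := TensorProduct.map_comp LinearMap.id H F LinearMap.id
  rw [LinearMap.comp_id, LinearMap.id_comp] at this
  exact DFunLike.congr_fun this u

end mapvariants

variable {B : Type} [Ring B] [Algebra R B]

/-- convolution of two linear endomorphisms w.r.t. a "comultiplication" `D` -/
noncomputable def conv (D : B →ₗ[R] B ⊗[R] B) (f g : B →ₗ[R] B) : B →ₗ[R] B :=
  LinearMap.mul' R B ∘ₗ TensorProduct.map f g ∘ₗ D

lemma conv_apply (D : B →ₗ[R] B ⊗[R] B) (f g : B →ₗ[R] B) (x : B) :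
    conv D f g x = LinearMap.mul' R B (TensorProduct.map f g (D x)) := rfl

lemma mul_assoc_lin (w : (B ⊗[R] B) ⊗[R] B) :
    LinearMap.mul' R B (TensorProduct.map (LinearMap.mul' R B) LinearMap.id w)
      = LinearMap.mul' R B (TensorProduct.map LinearMap.id (LinearMap.mul' R B)
          (TensorProduct.assoc R B B B w)) := by
  have : (LinearMap.mul' R B ∘ₗ TensorProduct.map (LinearMap.mul' R B) LinearMap.id)
      = (LinearMap.mul' R B ∘ₗ TensorProduct.map LinearMap.id (LinearMap.mul' R B)
          ∘ₗ (TensorProduct.assoc R B B B).toLinearMap) := by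
    apply TensorProduct.ext_threefold
    intro x y z
    simp [mul_assoc]
  exact DFunLike.congr_fun this w

lemma conv_assoc (D : B →ₗ[R] B ⊗[R] B)
    (hco : ∀ x, TensorProduct.map D LinearMap.id (D x)
      = (TensorProduct.assoc R B B B).symm (TensorProduct.map LinearMap.id D (D x)))
    (f g h : B →ₗ[R] B) :
    conv D (conv D f g) h = conv D f (conv D g h) := by
  ext x
  rw [conv_apply, conv_apply]
  have e1 : TensorProduct.map (conv D f g) h (D x)
      = TensorProduct.map (LinearMap.mul' R B) LinearMap.id
          (TensorProduct.map (TensorProduct.map f g) h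
            (TensorProduct.map D LinearMap.id (D x))) := by
    rw [conv, mcl, mcl']
  have e2 : TensorProduct.map f (conv D g h) (D x)
      = TensorProduct.map LinearMap.id (LinearMap.mul' R B)
          (TensorProduct.map f (TensorProduct.map g h ∘ₗ D) (D x)) := by
    rw [conv, mcr]
  rw [e1, e2, mul_assoc_lin, hco]
  have e3 : TensorProduct.assoc R B B B
      (TensorProduct.map (TensorProduct.map f g) h
        ((TensorProduct.assoc R B B B).symm (TensorProduct.map LinearMap.id D (D x))))
      = TensorProduct.map f (TensorProduct.map g h)
          (TensorProduct.map LinearMap.id D (D x)) := by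
    rw [TensorProduct.map_map_assoc_symm]
    simp
  rw [e3, ← mcr']

lemma conv_unit_right (D : B →ₗ[R] B ⊗[R] B) (E : B →ₗ[R] R)
    (hcr : ∀ x, (TensorProduct.rid R B) (TensorProduct.map LinearMap.id E (D x)) = x)
    (f : B →ₗ[R] B) :
    conv D f (Algebra.linearMap R B ∘ₗ E) = f := by
  ext x
  rw [conv_apply]
  rw [mcr (R := R) f (Algebra.linearMap R B) E (D x)]
  have e2 : ∀ u : B ⊗[R] R, LinearMap.mul' R B
      (TensorProduct.map LinearMap.id (Algebra.linearMap R B) u)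
      = (TensorProduct.rid R B) u := by
    intro u
    have : (LinearMap.mul' R B ∘ₗ TensorProduct.map LinearMap.id (Algebra.linearMap R B))
        = (TensorProduct.rid R B).toLinearMap := by
      apply TensorProduct.ext'
      intro a r
      simp [Algebra.algebraMap_eq_smul_one, TensorProduct.rid_tmul, mul_smul_comm]
    exact DFunLike.congr_fun this u
  rw [e2, mc5 (R := R) f E (D x)]
  have e4 : ∀ u : B ⊗[R] R, (TensorProduct.rid R B) (TensorProduct.map f LinearMap.id u)
      = f ((TensorProduct.rid R B) u) := by
    intro u
    have : ((TensorProduct.rid R B).toLinearMap ∘ₗ TensorProduct.map f LinearMap.id)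
        = (f ∘ₗ (TensorProduct.rid R B).toLinearMap) := by
      apply TensorProduct.ext'
      intro a r
      simp
    exact DFunLike.congr_fun this u
  rw [e4, hcr]

lemma conv_unit_left (D : B →ₗ[R] B ⊗[R] B) (E : B →ₗ[R] R)
    (hcl : ∀ x, (TensorProduct.lid R B) (TensorProduct.map E LinearMap.id (D x)) = x)
    (g : B →ₗ[R] B) :
    conv D (Algebra.linearMap R B ∘ₗ E) g = g := by
  ext x
  rw [conv_apply]
  rw [mcl (R := R) (Algebra.linearMap R B) E g (D x)]
  have e2 : ∀ u : R ⊗[R] B, LinearMap.mul' R B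
      (TensorProduct.map (Algebra.linearMap R B) LinearMap.id u)
      = (TensorProduct.lid R B) u := by
    intro u
    have : (LinearMap.mul' R B ∘ₗ TensorProduct.map (Algebra.linearMap R B) LinearMap.id)
        = (TensorProduct.lid R B).toLinearMap := by
      apply TensorProduct.ext'
      intro r a
      simp [Algebra.algebraMap_eq_smul_one, TensorProduct.lid_tmul, smul_mul_assoc]
    exact DFunLike.congr_fun this u
  rw [e2, mc6 (R := R) E g (D x)]
  have e4 : ∀ u : R ⊗[R] B, (TensorProduct.lid R B) (TensorProduct.map LinearMap.id g u)
      = g ((TensorProduct.lid R B) u) := by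
    intro u
    have : ((TensorProduct.lid R B).toLinearMap ∘ₗ TensorProduct.map LinearMap.id g)
        = (g ∘ₗ (TensorProduct.lid R B).toLinearMap) := by
      apply TensorProduct.ext'
      intro r a
      simp
    exact DFunLike.congr_fun this u
  rw [e4, hcl]

lemma antipode_unique (D : B →ₗ[R] B ⊗[R] B) (E : B →ₗ[R] R)
    (hco : ∀ x, TensorProduct.map D LinearMap.id (D x)
      = (TensorProduct.assoc R B B B).symm (TensorProduct.map LinearMap.id D (D x)))
    (hcl : ∀ x, (TensorProduct.lid R B) (TensorProduct.map E LinearMap.id (D x)) = x)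
    (hcr : ∀ x, (TensorProduct.rid R B) (TensorProduct.map LinearMap.id E (D x)) = x)
    {S S' : B →ₗ[R] B}
    (hS : conv D S LinearMap.id = Algebra.linearMap R B ∘ₗ E)
    (hS' : conv D LinearMap.id S' = Algebra.linearMap R B ∘ₗ E) :
    S = S' := by
  have h1 : S = conv D S (conv D LinearMap.id S') := by
    rw [hS', conv_unit_right D E hcr]
  have h2 : conv D S (conv D LinearMap.id S') = conv D (conv D S LinearMap.id) S' := by
    rw [conv_assoc D hco]
  rw [h1, h2, hS, conv_unit_left D E hcl]

end Conv


/-! ### Values on generators; ext lemma -/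

section Values

variable (hq : q ≠ 0)

open MulOpposite

@[simp] lemma delU_mk (a : FreeAlgebra k (Gen n)) :
    delU k n β q qi hq (mkUb k n β q qi a) = delF k n β q qi a :=
  RingQuot.liftAlgHom_mkAlgHom_apply _ _ _ _

@[simp] lemma sU_mk (a : FreeAlgebra k (Gen n)) :
    sU k n β q qi hq (mkUb k n β q qi a) = sF k n β q qi a :=
  RingQuot.liftAlgHom_mkAlgHom_apply _ _ _ _

@[simp] lemma delU_tg (i : Fin n) (t b : Bool) :
    delU k n β q qi hq (tg k n β q qi i t b)
      = tg k n β q qi i t b ⊗ₜ[k] tg k n β q qi i t b := by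
  show delU k n β q qi hq (mkUb k n β q qi (gg k (.tor i t b))) = _
  rw [delU_mk, delF_tor]

@[simp] lemma delU_eg (i : Fin n) :
    delU k n β q qi hq (eg k n β q qi i)
      = eg k n β q qi i ⊗ₜ[k] tg k n β q qi i false false + 1 ⊗ₜ[k] eg k n β q qi i := by
  show delU k n β q qi hq (mkUb k n β q qi (gg k (.e i))) = _
  rw [delU_mk, delF_e]

@[simp] lemma delU_fg (i : Fin n) :
    delU k n β q qi hq (fg k n β q qi i)
      = fg k n β q qi i ⊗ₜ[k] 1 + tg k n β q qi i true true ⊗ₜ[k] fg k n β q qi i := by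
  show delU k n β q qi hq (mkUb k n β q qi (gg k (.f i))) = _
  rw [delU_mk, delF_f]

@[simp] lemma epsU_tg (i : Fin n) (t b : Bool) :
    epsU k n β q qi (tg k n β q qi i t b) = 1 := by
  show epsU k n β q qi (mkUb k n β q qi (gg k (.tor i t b))) = 1
  rw [epsU_mk, epsF_tor]

@[simp] lemma epsU_eg (i : Fin n) : epsU k n β q qi (eg k n β q qi i) = 0 := by
  show epsU k n β q qi (mkUb k n β q qi (gg k (.e i))) = 0
  rw [epsU_mk, epsF_e]

@[simp] lemma epsU_fg (i : Fin n) : epsU k n β q qi (fg k n β q qi i) = 0 := by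
  show epsU k n β q qi (mkUb k n β q qi (gg k (.f i))) = 0
  rw [epsU_mk, epsF_f]

lemma SU_apply (x : Ub k n β q qi) :
    SU k n β q qi hq x = unop (sU k n β q qi hq x) := rfl

@[simp] lemma SU_tg (i : Fin n) (t b : Bool) :
    SU k n β q qi hq (tg k n β q qi i t b) = tg k n β q qi i t (!b) := by
  show SU k n β q qi hq (mkUb k n β q qi (gg k (.tor i t b))) = _
  rw [SU_apply, sU_mk, sF_tor, unop_op]

@[simp] lemma SU_eg (i : Fin n) :
    SU k n β q qi hq (eg k n β q qi i)
      = -(eg k n β q qi i * tg k n β q qi i false true) := by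
  show SU k n β q qi hq (mkUb k n β q qi (gg k (.e i))) = _
  rw [SU_apply, sU_mk, sF_e, unop_op]

@[simp] lemma SU_fg (i : Fin n) :
    SU k n β q qi hq (fg k n β q qi i)
      = -(tg k n β q qi i true false * fg k n β q qi i) := by
  show SU k n β q qi hq (mkUb k n β q qi (gg k (.f i))) = _
  rw [SU_apply, sU_mk, sF_f, unop_op]

@[simp] lemma SU_one : SU k n β q qi hq 1 = 1 := by
  rw [SU_apply, map_one]; rfl

lemma SU_mul (x y : Ub k n β q qi) :
    SU k n β q qi hq (x * y) = SU k n β q qi hq y * SU k n β q qi hq x := by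
  rw [SU_apply, map_mul]; rfl

@[simp] lemma SU_algebraMap (r : k) :
    SU k n β q qi hq (algebraMap k (Ub k n β q qi) r) = algebraMap k (Ub k n β q qi) r := by
  rw [SU_apply, AlgHom.commutes]; rfl

@[simp] lemma mk_tor (i : Fin n) (t b : Bool) :
    mkUb k n β q qi (gg k (.tor i t b)) = tg k n β q qi i t b := rfl

@[simp] lemma mk_e (i : Fin n) : mkUb k n β q qi (gg k (.e i)) = eg k n β q qi i := rfl

@[simp] lemma mk_f (i : Fin n) : mkUb k n β q qi (gg k (.f i)) = fg k n β q qi i := rfl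

lemma ubHom_ext {B : Type} [Semiring B] [Algebra k B] {F G : Ub k n β q qi →ₐ[k] B}
    (h : ∀ x : Gen n, F (mkUb k n β q qi (gg k x)) = G (mkUb k n β q qi (gg k x))) :
    F = G := by
  apply RingQuot.ringQuot_ext'
  apply FreeAlgebra.hom_ext
  funext x
  simpa [mkUb] using h x

lemma Kg_tg (i : Fin n) : Kg k n β q qi i = tg k n β q qi i false false := rfl
lemma Kginv_tg (i : Fin n) : Kginv k n β q qi i = tg k n β q qi i false true := rfl
lemma Ktg_tg (i : Fin n) : Ktg k n β q qi i = tg k n β q qi i true false := rfl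
lemma Ktginv_tg (i : Fin n) : Ktginv k n β q qi i = tg k n β q qi i true true := rfl
lemma eg_mk (i : Fin n) : eg k n β q qi i = mkUb k n β q qi (gg k (.e i)) := rfl
lemma fg_mk (i : Fin n) : fg k n β q qi i = mkUb k n β q qi (gg k (.f i)) := rfl

end Values


/-! ### Generic antipode-law-on-products lemmas -/

section AntiLaw

open TensorProduct

variable {R : Type} [CommRing R] {B : Type} [Ring B] [Algebra R B]

noncomputable def GmAux (S : B →ₗ[R] B) (z : B) : B ⊗[R] B →ₗ[R] B :=
  TensorProduct.lift (LinearMap.mk₂ R (fun c d => S c * z * d)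
    (fun c c' d => by rw [map_add, add_mul, add_mul])
    (fun r c d => by rw [map_smul, smul_mul_assoc, smul_mul_assoc])
    (fun c d d' => by rw [mul_add])
    (fun r c d => by rw [mul_smul_comm]))

@[simp] lemma GmAux_tmul (S : B →ₗ[R] B) (z c d : B) :
    GmAux S z (c ⊗ₜ[R] d) = S c * z * d := rfl

lemma GmAux_zero (S : B →ₗ[R] B) (v : B ⊗[R] B) : GmAux S 0 v = 0 := by
  induction v with
  | zero => simp
  | tmul c d => simp
  | add v w hv hw => rw [map_add, hv, hw, add_zero]

lemma GmAux_add (S : B →ₗ[R] B) (z z' : B) (v : B ⊗[R] B) :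
    GmAux S (z + z') v = GmAux S z v + GmAux S z' v := by
  induction v with
  | zero => simp
  | tmul c d => simp [mul_add, add_mul]
  | add v w hv hw =>
      rw [map_add, map_add, map_add, hv, hw]
      abel

noncomputable def HmAux (S : B →ₗ[R] B) (z : B) : B ⊗[R] B →ₗ[R] B :=
  TensorProduct.lift (LinearMap.mk₂ R (fun a b => a * z * S b)
    (fun a a' b => by rw [add_mul, add_mul])
    (fun r a b => by rw [smul_mul_assoc, smul_mul_assoc])
    (fun a b b' => by rw [map_add, mul_add])
    (fun r a b => by rw [map_smul, mul_smul_comm]))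

@[simp] lemma HmAux_tmul (S : B →ₗ[R] B) (z a b : B) :
    HmAux S z (a ⊗ₜ[R] b) = a * z * S b := rfl

lemma HmAux_zero (S : B →ₗ[R] B) (v : B ⊗[R] B) : HmAux S 0 v = 0 := by
  induction v with
  | zero => simp
  | tmul c d => simp
  | add v w hv hw => rw [map_add, hv, hw, add_zero]

lemma HmAux_add (S : B →ₗ[R] B) (z z' : B) (v : B ⊗[R] B) :
    HmAux S (z + z') v = HmAux S z v + HmAux S z' v := by
  induction v with
  | zero => simp
  | tmul c d => simp [mul_add, add_mul]
  | add v w hv hw =>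
      rw [map_add, map_add, map_add, hv, hw]
      abel

lemma mulSid_mul (S : B →ₗ[R] B) (hanti : ∀ a c : B, S (a * c) = S c * S a)
    (u v : B ⊗[R] B) :
    LinearMap.mul' R B (TensorProduct.map S LinearMap.id (u * v))
      = GmAux S (LinearMap.mul' R B (TensorProduct.map S LinearMap.id u)) v := by
  induction u with
  | zero =>
      simp only [zero_mul, map_zero]
      exact (GmAux_zero S _).symm
  | add u1 u2 h1 h2 =>
      rw [add_mul, map_add, map_add, map_add, map_add, h1, h2, GmAux_add]
  | tmul a b =>
      induction v with
      | zero => rw [mul_zero, map_zero, map_zero, map_zero]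
      | add v1 v2 g1 g2 => rw [mul_add, map_add, map_add, map_add, g1, g2]
      | tmul c d =>
          rw [Algebra.TensorProduct.tmul_mul_tmul, TensorProduct.map_tmul,
            TensorProduct.map_tmul, LinearMap.mul'_apply, LinearMap.mul'_apply,
            GmAux_tmul, hanti, LinearMap.id_apply, LinearMap.id_apply]
          simp only [mul_assoc]

lemma muliS_mul (S : B →ₗ[R] B) (hanti : ∀ a c : B, S (a * c) = S c * S a)
    (u v : B ⊗[R] B) :
    LinearMap.mul' R B (TensorProduct.map LinearMap.id S (u * v))
      = HmAux S (LinearMap.mul' R B (TensorProduct.map LinearMap.id S v)) u := by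
  induction u with
  | zero => rw [zero_mul, map_zero, map_zero, map_zero]
  | add u1 u2 h1 h2 => rw [add_mul, map_add, map_add, map_add, h1, h2]
  | tmul a b =>
      induction v with
      | zero =>
          simp only [mul_zero, map_zero]
          exact (HmAux_zero S _).symm
      | add v1 v2 g1 g2 =>
          rw [mul_add, map_add, map_add, map_add, map_add, g1, g2, HmAux_add]
      | tmul c d =>
          rw [Algebra.TensorProduct.tmul_mul_tmul, TensorProduct.map_tmul,
            TensorProduct.map_tmul, LinearMap.mul'_apply, LinearMap.mul'_apply,
            HmAux_tmul, hanti, LinearMap.id_apply, LinearMap.id_apply]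
          simp only [mul_assoc]

lemma GmAux_smul_one (S : B →ₗ[R] B) (r : R) (v : B ⊗[R] B) :
    GmAux S (r • (1 : B)) v = r • LinearMap.mul' R B (TensorProduct.map S LinearMap.id v) := by
  induction v with
  | zero => simp
  | tmul c d => simp [mul_smul_comm, smul_mul_assoc]
  | add v w hv hw => rw [map_add, map_add, map_add, hv, hw, smul_add]

lemma HmAux_smul_one (S : B →ₗ[R] B) (r : R) (v : B ⊗[R] B) :
    HmAux S (r • (1 : B)) v = r • LinearMap.mul' R B (TensorProduct.map LinearMap.id S v) := by
  induction v with
  | zero => simp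
  | tmul c d => simp [mul_smul_comm, smul_mul_assoc]
  | add v w hv hw => rw [map_add, map_add, map_add, hv, hw, smul_add]

/-- generic cancellation helpers (stated generically since rewriting inside
`RingQuot` directly is painful) -/
lemma gcancA {e K' K : B} (h : K' * K = 1) : -(e * K') * K + 1 * e = 0 := by
  rw [neg_mul, mul_assoc, h, mul_one, one_mul, neg_add_cancel]

lemma gcancB {x : B} : -x * 1 + x = 0 := by rw [mul_one, neg_add_cancel]

lemma gcancC {x y : B} (h : y = x) : x + 1 * -y = 0 := by
  rw [h, one_mul, add_neg_cancel]

lemma gcancD {f Kt' Kt : B} (h : Kt' * Kt = 1) : f * 1 + Kt' * -(Kt * f) = 0 := by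
  rw [mul_neg, ← mul_assoc, h, one_mul, mul_one, add_neg_cancel]

end AntiLaw


/-! ### The Hopf laws for the constructed maps -/

section Laws

variable (hq : q ≠ 0)

local notation "A" => Ub k n β q qi

lemma cone {R : Type} [CommRing R] {B : Type} [Ring B] [Algebra R B] (x : B) :
    (1 : R) • x = x := one_smul R x

lemma czo {R : Type} [CommRing R] {B : Type} [Ring B] [Algebra R B] (x y : B) :
    (0 : R) • x + (1 : R) • y = y := by rw [zero_smul, one_smul, zero_add]

lemma czo' {R : Type} [CommRing R] {B : Type} [Ring B] [Algebra R B] (x y : B) :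
    (1 : R) • x + (0 : R) • y = x := by rw [zero_smul, one_smul, add_zero]

lemma coassoc_law :
    (Algebra.TensorProduct.assoc k k k A A A).toAlgHom.comp
        ((Algebra.TensorProduct.map (delU k n β q qi hq) (AlgHom.id k A)).comp
          (delU k n β q qi hq)) =
      (Algebra.TensorProduct.map (AlgHom.id k A) (delU k n β q qi hq)).comp
        (delU k n β q qi hq) := by
  apply ubHom_ext
  intro x
  cases x with
  | tor i t b =>
      simp [delU_mk, delF_tor, Algebra.TensorProduct.map_tmul,
        Algebra.TensorProduct.assoc_tmul]
  | e i =>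
      simp [delU_mk, delF_e, Algebra.TensorProduct.map_tmul,
        Algebra.TensorProduct.assoc_tmul, Algebra.TensorProduct.one_def,
        TensorProduct.tmul_add, TensorProduct.add_tmul]
      abel
  | f i =>
      simp [delU_mk, delF_f, Algebra.TensorProduct.map_tmul,
        Algebra.TensorProduct.assoc_tmul, Algebra.TensorProduct.one_def,
        TensorProduct.tmul_add, TensorProduct.add_tmul]
      abel

lemma counit_left_law :
    (Algebra.TensorProduct.lid k A).toAlgHom.comp
        ((Algebra.TensorProduct.map (epsU k n β q qi) (AlgHom.id k A)).comp
          (delU k n β q qi hq)) =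
      AlgHom.id k A := by
  apply ubHom_ext
  intro x
  cases x with
  | tor i t b =>
      simp [delU_mk, delF_tor, Algebra.TensorProduct.map_tmul,
        Algebra.TensorProduct.lid_tmul, cone]
  | e i =>
      simp only [AlgHom.coe_comp, Function.comp_apply, delU_mk, delF_e, map_add,
        Algebra.TensorProduct.map_tmul, AlgHom.coe_id, id_eq, map_one,
        AlgEquiv.toAlgHom_eq_coe, AlgHom.coe_coe, AlgEquiv.coe_toAlgHom, Algebra.TensorProduct.lid_tmul]
      show (epsU k n β q qi (eg k n β q qi i)) • _ + _ = _
      rw [epsU_eg]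
      exact czo _ _
  | f i =>
      simp only [AlgHom.coe_comp, Function.comp_apply, delU_mk, delF_f, map_add,
        Algebra.TensorProduct.map_tmul, AlgHom.coe_id, id_eq, map_one,
        AlgEquiv.toAlgHom_eq_coe, AlgHom.coe_coe, AlgEquiv.coe_toAlgHom, Algebra.TensorProduct.lid_tmul,
        epsU_fg, epsU_tg]
      exact czo _ _

lemma counit_right_law :
    (Algebra.TensorProduct.rid k k A).toAlgHom.comp
        ((Algebra.TensorProduct.map (AlgHom.id k A) (epsU k n β q qi)).comp
          (delU k n β q qi hq)) =
      AlgHom.id k A := by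
  apply ubHom_ext
  intro x
  cases x with
  | tor i t b =>
      simp [delU_mk, delF_tor, Algebra.TensorProduct.map_tmul,
        Algebra.TensorProduct.rid_tmul, cone]
  | e i =>
      simp only [AlgHom.coe_comp, Function.comp_apply, delU_mk, delF_e, map_add,
        Algebra.TensorProduct.map_tmul, AlgHom.coe_id, id_eq, map_one,
        AlgEquiv.toAlgHom_eq_coe, AlgHom.coe_coe, AlgEquiv.coe_toAlgHom, Algebra.TensorProduct.rid_tmul,
        epsU_eg, epsU_tg]
      exact czo' _ _
  | f i =>
      simp only [AlgHom.coe_comp, Function.comp_apply, delU_mk, delF_f, map_add,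
        Algebra.TensorProduct.map_tmul, AlgHom.coe_id, id_eq, map_one,
        AlgEquiv.toAlgHom_eq_coe, AlgHom.coe_coe, AlgEquiv.coe_toAlgHom, Algebra.TensorProduct.rid_tmul,
        epsU_fg, epsU_tg]
      exact czo' _ _

lemma antipode_left_law :
    (LinearMap.mul' k A) ∘ₗ (TensorProduct.map (SU k n β q qi hq) LinearMap.id) ∘ₗ
        (delU k n β q qi hq).toLinearMap =
      (Algebra.linearMap k A) ∘ₗ (epsU k n β q qi).toLinearMap := by
  apply LinearMap.ext
  intro x
  obtain ⟨a, rfl⟩ := RingQuot.mkAlgHom_surjective k (Rel k n β q qi) x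
  show LinearMap.mul' k A (TensorProduct.map (SU k n β q qi hq) LinearMap.id
      (delU k n β q qi hq (RingQuot.mkAlgHom k (Rel k n β q qi) a)))
    = algebraMap k A (epsU k n β q qi (RingQuot.mkAlgHom k (Rel k n β q qi) a))
  have hmk : ∀ b : FreeAlgebra k (Gen n),
      RingQuot.mkAlgHom k (Rel k n β q qi) b = mkUb k n β q qi b := fun _ => rfl
  rw [hmk]
  induction a using FreeAlgebra.induction with
  | grade0 r =>
      rw [AlgHom.commutes, AlgHom.commutes, Algebra.TensorProduct.algebraMap_apply,
        TensorProduct.map_tmul, LinearMap.mul'_apply, SU_algebraMap,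
        LinearMap.id_apply, mul_one, AlgHom.commutes, Algebra.algebraMap_self_apply]
  | grade1 x =>
      cases x with
      | tor i t b =>
          rw [show mkUb k n β q qi (gg k (.tor i t b)) = tg k n β q qi i t b from rfl,
            delU_tg, epsU_tg, TensorProduct.map_tmul, LinearMap.mul'_apply, SU_tg,
            LinearMap.id_apply, map_one]
          cases b
          · exact tg_inv_mul k n β q qi i t
          · exact tg_mul_inv k n β q qi i t
      | e i =>
          rw [show mkUb k n β q qi (gg k (.e i)) = eg k n β q qi i from rfl,
            delU_eg, epsU_eg, map_add, TensorProduct.map_tmul, TensorProduct.map_tmul,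
            map_add, LinearMap.mul'_apply, LinearMap.mul'_apply, SU_eg, SU_one,
            LinearMap.id_apply, LinearMap.id_apply, map_zero]
          exact gcancA (tg_inv_mul k n β q qi i false)
      | f i =>
          rw [show mkUb k n β q qi (gg k (.f i)) = fg k n β q qi i from rfl,
            delU_fg, epsU_fg, map_add, TensorProduct.map_tmul, TensorProduct.map_tmul,
            map_add, LinearMap.mul'_apply, LinearMap.mul'_apply, SU_fg, SU_tg,
            LinearMap.id_apply, LinearMap.id_apply, map_zero]
          exact gcancB
  | mul a b ha hb =>
      have ha' : LinearMap.mul' k A (TensorProduct.map (SU k n β q qi hq) LinearMap.id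
          (delU k n β q qi hq (mkUb k n β q qi a)))
          = (epsU k n β q qi (mkUb k n β q qi a)) • (1 : A) := by
        rw [ha, Algebra.algebraMap_eq_smul_one]
      have hb' : LinearMap.mul' k A (TensorProduct.map (SU k n β q qi hq) LinearMap.id
          (delU k n β q qi hq (mkUb k n β q qi b)))
          = (epsU k n β q qi (mkUb k n β q qi b)) • (1 : A) := by
        rw [hb, Algebra.algebraMap_eq_smul_one]
      rw [map_mul, map_mul,
        mulSid_mul (SU k n β q qi hq) (fun x y => SU_mul k n β q qi hq x y) _ _,
        ha', GmAux_smul_one, hb', smul_smul, map_mul,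
        Algebra.algebraMap_eq_smul_one]
  | add a b ha hb =>
      simp only [map_add, ha, hb]

lemma antipode_right_law :
    (LinearMap.mul' k A) ∘ₗ (TensorProduct.map LinearMap.id (SU k n β q qi hq)) ∘ₗ
        (delU k n β q qi hq).toLinearMap =
      (Algebra.linearMap k A) ∘ₗ (epsU k n β q qi).toLinearMap := by
  apply LinearMap.ext
  intro x
  obtain ⟨a, rfl⟩ := RingQuot.mkAlgHom_surjective k (Rel k n β q qi) x
  show LinearMap.mul' k A (TensorProduct.map LinearMap.id (SU k n β q qi hq)
      (delU k n β q qi hq (RingQuot.mkAlgHom k (Rel k n β q qi) a)))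
    = algebraMap k A (epsU k n β q qi (RingQuot.mkAlgHom k (Rel k n β q qi) a))
  have hmk : ∀ b : FreeAlgebra k (Gen n),
      RingQuot.mkAlgHom k (Rel k n β q qi) b = mkUb k n β q qi b := fun _ => rfl
  rw [hmk]
  induction a using FreeAlgebra.induction with
  | grade0 r =>
      rw [AlgHom.commutes, AlgHom.commutes, Algebra.TensorProduct.algebraMap_apply,
        TensorProduct.map_tmul, LinearMap.mul'_apply, SU_one,
        LinearMap.id_apply, mul_one, AlgHom.commutes, Algebra.algebraMap_self_apply]
  | grade1 x =>
      cases x with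
      | tor i t b =>
          rw [show mkUb k n β q qi (gg k (.tor i t b)) = tg k n β q qi i t b from rfl,
            delU_tg, epsU_tg, TensorProduct.map_tmul, LinearMap.mul'_apply, SU_tg,
            LinearMap.id_apply, map_one]
          cases b
          · exact tg_mul_inv k n β q qi i t
          · exact tg_inv_mul k n β q qi i t
      | e i =>
          rw [show mkUb k n β q qi (gg k (.e i)) = eg k n β q qi i from rfl,
            delU_eg, epsU_eg, map_add, TensorProduct.map_tmul, TensorProduct.map_tmul,
            map_add, LinearMap.mul'_apply, LinearMap.mul'_apply, SU_eg, SU_tg,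
            LinearMap.id_apply, LinearMap.id_apply, map_zero]
          exact gcancC rfl
      | f i =>
          rw [show mkUb k n β q qi (gg k (.f i)) = fg k n β q qi i from rfl,
            delU_fg, epsU_fg, map_add, TensorProduct.map_tmul, TensorProduct.map_tmul,
            map_add, LinearMap.mul'_apply, LinearMap.mul'_apply, SU_fg, SU_one,
            LinearMap.id_apply, LinearMap.id_apply, map_zero]
          exact gcancD (tg_inv_mul k n β q qi i true)
  | mul a b ha hb =>
      have ha' : LinearMap.mul' k A (TensorProduct.map LinearMap.id (SU k n β q qi hq)
          (delU k n β q qi hq (mkUb k n β q qi a)))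
          = (epsU k n β q qi (mkUb k n β q qi a)) • (1 : A) := by
        rw [ha, Algebra.algebraMap_eq_smul_one]
      have hb' : LinearMap.mul' k A (TensorProduct.map LinearMap.id (SU k n β q qi hq)
          (delU k n β q qi hq (mkUb k n β q qi b)))
          = (epsU k n β q qi (mkUb k n β q qi b)) • (1 : A) := by
        rw [hb, Algebra.algebraMap_eq_smul_one]
      rw [map_mul, map_mul,
        muliS_mul (SU k n β q qi hq) (fun x y => SU_mul k n β q qi hq x y) _ _,
        hb', HmAux_smul_one, ha', smul_smul, map_mul,
        Algebra.algebraMap_eq_smul_one, mul_comm]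
  | add a b ha hb =>
      simp only [map_add, ha, hb]

end Laws


/-! ### Agreement between algebraic and linear tensor structure maps -/

section Agree

variable {B C D E : Type} [Semiring B] [Semiring C] [Semiring D] [Semiring E]
  [Algebra k B] [Algebra k C] [Algebra k D] [Algebra k E]

lemma mapAlg_agree (F : B →ₐ[k] D) (G : C →ₐ[k] E) (u : B ⊗[k] C) :
    Algebra.TensorProduct.map F G u
      = TensorProduct.map F.toLinearMap G.toLinearMap u := by
  induction u with
  | zero => simp
  | add x y hx hy => rw [map_add, map_add, hx, hy]
  | tmul a b => rw [Algebra.TensorProduct.map_tmul, TensorProduct.map_tmul]; rfl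

lemma assoc_agree (u : (B ⊗[k] C) ⊗[k] D) :
    Algebra.TensorProduct.assoc k k k B C D u = TensorProduct.assoc k B C D u := by
  induction u with
  | zero => simp
  | add x y hx hy => rw [map_add, map_add, hx, hy]
  | tmul xy z =>
      induction xy with
      | zero => rw [TensorProduct.zero_tmul, map_zero, map_zero]
      | add p r hp hr => rw [TensorProduct.add_tmul, map_add, map_add, hp, hr]
      | tmul a b => rw [Algebra.TensorProduct.assoc_tmul, TensorProduct.assoc_tmul]

lemma lid_agree (u : k ⊗[k] B) :
    Algebra.TensorProduct.lid k B u = TensorProduct.lid k B u := by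
  induction u with
  | zero => simp
  | add x y hx hy => rw [map_add, map_add, hx, hy]
  | tmul r a => rw [Algebra.TensorProduct.lid_tmul, TensorProduct.lid_tmul]

lemma rid_agree (u : B ⊗[k] k) :
    Algebra.TensorProduct.rid k k B u = TensorProduct.rid k B u := by
  induction u with
  | zero => simp
  | add x y hx hy => rw [map_add, map_add, hx, hy]
  | tmul a r => rw [Algebra.TensorProduct.rid_tmul, TensorProduct.rid_tmul]

end Agree

section PointwiseLaws

variable (hq : q ≠ 0)

local notation "A" => Ub k n β q qi

lemma coassoc_pointwise (x : Ub k n β q qi) :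
    TensorProduct.map (delU k n β q qi hq).toLinearMap LinearMap.id
        ((delU k n β q qi hq).toLinearMap x)
      = (TensorProduct.assoc k A A A).symm
          (TensorProduct.map LinearMap.id (delU k n β q qi hq).toLinearMap
            ((delU k n β q qi hq).toLinearMap x)) := by
  have h0 := AlgHom.congr_fun (coassoc_law k n β q qi hq) x
  simp only [AlgHom.coe_comp, Function.comp_apply, AlgEquiv.toAlgHom_eq_coe,
    AlgHom.coe_coe, AlgEquiv.coe_toAlgHom] at h0
  rw [mapAlg_agree, mapAlg_agree, assoc_agree, AlgHom.toLinearMap_id] at h0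
  rw [LinearEquiv.eq_symm_apply]
  exact h0

lemma counit_left_pointwise (x : Ub k n β q qi) :
    TensorProduct.lid k A (TensorProduct.map (epsU k n β q qi).toLinearMap LinearMap.id
      ((delU k n β q qi hq).toLinearMap x)) = x := by
  have h0 := AlgHom.congr_fun (counit_left_law k n β q qi hq) x
  simp only [AlgHom.coe_comp, Function.comp_apply, AlgEquiv.toAlgHom_eq_coe,
    AlgHom.coe_coe, AlgEquiv.coe_toAlgHom, AlgHom.coe_id, id_eq] at h0
  rw [mapAlg_agree, lid_agree, AlgHom.toLinearMap_id] at h0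
  exact h0

lemma counit_right_pointwise (x : Ub k n β q qi) :
    TensorProduct.rid k A (TensorProduct.map LinearMap.id (epsU k n β q qi).toLinearMap
      ((delU k n β q qi hq).toLinearMap x)) = x := by
  have h0 := AlgHom.congr_fun (counit_right_law k n β q qi hq) x
  simp only [AlgHom.coe_comp, Function.comp_apply, AlgEquiv.toAlgHom_eq_coe,
    AlgHom.coe_coe, AlgEquiv.coe_toAlgHom, AlgHom.coe_id, id_eq] at h0
  rw [mapAlg_agree, rid_agree, AlgHom.toLinearMap_id] at h0
  exact h0

end PointwiseLaws

/-- The data of a Hopf algebra structure on `U(β)` with the prescribed values on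
the generators. -/
noncomputable def IsHopfStructure
    (Δ : Ub k n β q qi →ₐ[k] Ub k n β q qi ⊗[k] Ub k n β q qi)
    (ε : Ub k n β q qi →ₐ[k] k)
    (S : Ub k n β q qi →ₗ[k] Ub k n β q qi) : Prop :=
  -- coassociativity
  (Algebra.TensorProduct.assoc k k k (Ub k n β q qi) (Ub k n β q qi)
        (Ub k n β q qi)).toAlgHom.comp
      ((Algebra.TensorProduct.map Δ (AlgHom.id k (Ub k n β q qi))).comp Δ) =
    (Algebra.TensorProduct.map (AlgHom.id k (Ub k n β q qi)) Δ).comp Δ ∧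
  -- counit laws
  (Algebra.TensorProduct.lid k (Ub k n β q qi)).toAlgHom.comp
      ((Algebra.TensorProduct.map ε (AlgHom.id k (Ub k n β q qi))).comp Δ) =
    AlgHom.id k (Ub k n β q qi) ∧
  (Algebra.TensorProduct.rid k k (Ub k n β q qi)).toAlgHom.comp
      ((Algebra.TensorProduct.map (AlgHom.id k (Ub k n β q qi)) ε).comp Δ) =
    AlgHom.id k (Ub k n β q qi) ∧
  -- antipode laws
  (LinearMap.mul' k (Ub k n β q qi)) ∘ₗ (TensorProduct.map S LinearMap.id) ∘ₗ
      Δ.toLinearMap =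
    (Algebra.linearMap k (Ub k n β q qi)) ∘ₗ ε.toLinearMap ∧
  (LinearMap.mul' k (Ub k n β q qi)) ∘ₗ (TensorProduct.map LinearMap.id S) ∘ₗ
      Δ.toLinearMap =
    (Algebra.linearMap k (Ub k n β q qi)) ∘ₗ ε.toLinearMap ∧
  -- the K_i, K̃_i (and their inverses) are group-like
  (∀ i, Δ (Kg k n β q qi i) = Kg k n β q qi i ⊗ₜ[k] Kg k n β q qi i) ∧
  (∀ i, Δ (Kginv k n β q qi i) = Kginv k n β q qi i ⊗ₜ[k] Kginv k n β q qi i) ∧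
  (∀ i, Δ (Ktg k n β q qi i) = Ktg k n β q qi i ⊗ₜ[k] Ktg k n β q qi i) ∧
  (∀ i, Δ (Ktginv k n β q qi i) = Ktginv k n β q qi i ⊗ₜ[k] Ktginv k n β q qi i) ∧
  -- Δe_i = e_i ⊗ K_i + 1 ⊗ e_i,  Δf_i = f_i ⊗ 1 + K̃_i⁻¹ ⊗ f_i
  (∀ i, Δ (eg k n β q qi i) =
      eg k n β q qi i ⊗ₜ[k] Kg k n β q qi i + 1 ⊗ₜ[k] eg k n β q qi i) ∧
  (∀ i, Δ (fg k n β q qi i) =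
      fg k n β q qi i ⊗ₜ[k] 1 + Ktginv k n β q qi i ⊗ₜ[k] fg k n β q qi i) ∧
  -- counit values
  (∀ i, ε (Kg k n β q qi i) = 1) ∧ (∀ i, ε (Kginv k n β q qi i) = 1) ∧
  (∀ i, ε (Ktg k n β q qi i) = 1) ∧ (∀ i, ε (Ktginv k n β q qi i) = 1) ∧
  (∀ i, ε (eg k n β q qi i) = 0) ∧ (∀ i, ε (fg k n β q qi i) = 0) ∧
  -- antipode values
  (∀ i, S (Kg k n β q qi i) = Kginv k n β q qi i) ∧
  (∀ i, S (Kginv k n β q qi i) = Kg k n β q qi i) ∧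
  (∀ i, S (Ktg k n β q qi i) = Ktginv k n β q qi i) ∧
  (∀ i, S (Ktginv k n β q qi i) = Ktg k n β q qi i) ∧
  (∀ i, S (eg k n β q qi i) = -(eg k n β q qi i * Kginv k n β q qi i)) ∧
  (∀ i, S (fg k n β q qi i) = -(Ktg k n β q qi i * fg k n β q qi i))

/-- the double-bosonisation `U(β) = k⟨f⟩ ⋊ U_q(β) ⋉ k⟨e⟩` of the
free braided groups admits a unique Hopf algebra structure in which all the
`K_i, K̃_i` are group-like, `Δe_i = e_i ⊗ K_i + 1 ⊗ e_i`,
`Δf_i = f_i ⊗ 1 + K̃_i⁻¹ ⊗ f_i`, with the stated counit and antipode values. -/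
theorem existsUnique_hopf_structure (k : Type) [Field k] (n : ℕ)
    (β : Matrix (Fin n) (Fin n) ℤ) (q : k) (qi : Fin n → k)
    (hq : q ≠ 0) (hqi : ∀ i, qi i ≠ 0) (hqi' : ∀ i, qi i - (qi i)⁻¹ ≠ 0) :
    ∃! t : (Ub k n β q qi →ₐ[k] Ub k n β q qi ⊗[k] Ub k n β q qi) ×
        (Ub k n β q qi →ₐ[k] k) × (Ub k n β q qi →ₗ[k] Ub k n β q qi),
      IsHopfStructure k n β q qi t.1 t.2.1 t.2.2 := by
  classical
  refine ⟨⟨delU k n β q qi hq, epsU k n β q qi, SU k n β q qi hq⟩, ?_, ?_⟩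
  · refine ⟨coassoc_law k n β q qi hq, counit_left_law k n β q qi hq,
      counit_right_law k n β q qi hq, antipode_left_law k n β q qi hq,
      antipode_right_law k n β q qi hq, ?_, ?_, ?_, ?_, ?_, ?_, ?_, ?_, ?_, ?_,
      ?_, ?_, ?_, ?_, ?_, ?_, ?_, ?_⟩
    · intro i; rw [Kg_tg, delU_tg]
    · intro i; rw [Kginv_tg, delU_tg]
    · intro i; rw [Ktg_tg, delU_tg]
    · intro i; rw [Ktginv_tg, delU_tg]
    · intro i; rw [delU_eg, Kg_tg]
    · intro i; rw [delU_fg, Ktginv_tg]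
    · intro i; rw [Kg_tg, epsU_tg]
    · intro i; rw [Kginv_tg, epsU_tg]
    · intro i; rw [Ktg_tg, epsU_tg]
    · intro i; rw [Ktginv_tg, epsU_tg]
    · intro i; exact epsU_eg k n β q qi i
    · intro i; exact epsU_fg k n β q qi i
    · intro i; rw [Kg_tg, SU_tg]; rfl
    · intro i; rw [Kginv_tg, SU_tg]; rfl
    · intro i; rw [Ktg_tg, SU_tg]; rfl
    · intro i; rw [Ktginv_tg, SU_tg]; rfl
    · intro i; rw [SU_eg, Kginv_tg]
    · intro i; rw [SU_fg, Ktg_tg]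
  · rintro ⟨D2, E2, S2⟩ hyp
    obtain ⟨hco, hcl, hcr, hal, har, hK, hKi, hKt, hKti, he, hf, cK, cKi, cKt,
      cKti, ce, cf, sK, sKi, sKt, sKti, se, sf⟩ := hyp
    have hD : D2 = delU k n β q qi hq := by
      apply ubHom_ext
      intro x
      cases x with
      | tor i t b =>
          rw [mk_tor, delU_tg]
          cases t <;> cases b
          · exact hK i
          · exact hKi i
          · exact hKt i
          · exact hKti i
      | e i =>
          rw [mk_e, delU_eg]
          exact he i
      | f i =>
          rw [mk_f, delU_fg]
          exact hf i
    have hE : E2 = epsU k n β q qi := by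
      apply ubHom_ext
      intro x
      cases x with
      | tor i t b =>
          rw [mk_tor, epsU_tg]
          cases t <;> cases b
          · exact cK i
          · exact cKi i
          · exact cKt i
          · exact cKti i
      | e i => rw [mk_e, epsU_eg]; exact ce i
      | f i => rw [mk_f, epsU_fg]; exact cf i
    subst hD
    subst hE
    have hS : S2 = SU k n β q qi hq := by
      exact antipode_unique (delU k n β q qi hq).toLinearMap
        (epsU k n β q qi).toLinearMap
        (coassoc_pointwise k n β q qi hq)
        (counit_left_pointwise k n β q qi hq)
        (counit_right_pointwise k n β q qi hq)
        hal (antipode_right_law k n β q qi hq)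
    subst hS
    rfl

end FreeDoubleBos
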